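/- Let m ≥ 3, r > 0, c_j = 2(j−1)r sin(π/m) for 1 ≤ j ≤ m+1, and let Q be the uniform distribution on [0, 2mr sin(π/m)]. Let n ≥ m+1 and let γ_n be a conditional unconstrained optimal set of n-points for Q with respect to the conditional set β = {c_j : 1 ≤ j ≤ m+1}. Set n_j = card(γ_n ∩ [c_j, c_{j+1}]) for 1 ≤ j ≤ m. Then n_j ≥ 2 for all j, n_1 + n_2 + ⋯ + n_m = n + m − 1, and |n_i − n_j| ∈ {0, 1} for all 1 ≤ i ≠ j ≤ m. -/

import Mathlib

open MeasureTheory Set Filter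

/-- The uniform distribution on `[a, b]`: normalized Lebesgue measure restricted to `[a, b]`. -/
noncomputable def uniformOn (a b : ℝ) : Measure ℝ :=
  (ENNReal.ofReal (b - a))⁻¹ • volume.restrict (Set.Icc a b)

/-- The distortion error of a set `s` of points for the measure `P`. -/
noncomputable def distortion (P : Measure ℝ) (s : Set ℝ) : ℝ :=
  ∫ x, sInf ((fun a => (x - a) ^ 2) '' s) ∂P

/-- The `n`-th conditional (unconstrained) quantization error for `P` with respect to
the conditional set `β`. -/
noncomputable def condQuantError (P : Measure ℝ) (β : Set ℝ) (n : ℕ) : ℝ :=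
  sInf { v : ℝ | ∃ α : Set ℝ, α.Finite ∧ α.ncard ≤ n - β.ncard ∧ v = distortion P (α ∪ β) }

noncomputable def nf (F : Finset ℝ) (x : ℝ) : ℝ := sInf ((fun a => (x - a) ^ 2) '' ↑F)

lemma bddBelow_img (s : Set ℝ) (x : ℝ) : BddBelow ((fun a => (x - a) ^ 2) '' s) :=
  ⟨0, fun y ⟨a, _, ha⟩ => ha ▸ sq_nonneg _⟩

lemma sInf_img_nonneg (s : Set ℝ) (x : ℝ) : 0 ≤ sInf ((fun a => (x - a) ^ 2) '' s) :=
  Real.sInf_nonneg fun y ⟨a, _, ha⟩ => ha ▸ sq_nonneg _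

lemma nf_nonneg (F : Finset ℝ) (x : ℝ) : 0 ≤ nf F x := sInf_img_nonneg _ _

lemma sInf_img_le {s : Set ℝ} {a : ℝ} (ha : a ∈ s) (x : ℝ) :
    sInf ((fun a => (x - a) ^ 2) '' s) ≤ (x - a) ^ 2 :=
  csInf_le (bddBelow_img s x) ⟨a, ha, rfl⟩

lemma nf_le {F : Finset ℝ} {a : ℝ} (ha : a ∈ F) (x : ℝ) : nf F x ≤ (x - a) ^ 2 :=
  sInf_img_le (by exact_mod_cast ha) x

lemma le_nf {F : Finset ℝ} (hF : F.Nonempty) {x c : ℝ} (h : ∀ a ∈ F, c ≤ (x - a) ^ 2) :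
    c ≤ nf F x :=
  le_csInf ((hF.to_set.image _)) (fun y ⟨a, ha, hay⟩ => hay ▸ h a (by exact_mod_cast ha))

lemma nf_eq_inf' {F : Finset ℝ} (hF : F.Nonempty) (x : ℝ) :
    nf F x = F.inf' hF (fun a => (x - a) ^ 2) := (Finset.inf'_eq_csInf_image F hF _).symm

lemma continuous_nf {F : Finset ℝ} (hF : F.Nonempty) : Continuous (nf F) := by
  have : Continuous (fun x => F.inf' hF (fun a => (x - a) ^ 2)) := by
    induction hF using Finset.Nonempty.cons_induction with
    | singleton a => simpa using (show Continuous fun x : ℝ => (x - a) ^ 2 by fun_prop)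
    | cons a s ha hs ih =>
        have : Continuous fun x => min ((x - a) ^ 2) (s.inf' hs fun b => (x - b) ^ 2) :=
          Continuous.min (by fun_prop) ih
        exact this.congr fun x => by rw [Finset.inf'_cons]
  exact this.congr fun x => (nf_eq_inf' hF x).symm

lemma nf_anti {F G : Finset ℝ} (hFG : F ⊆ G) (hF : F.Nonempty) (x : ℝ) :
    nf G x ≤ nf F x :=
  le_nf hF fun a ha => nf_le (hFG ha) x

lemma nf_le_min {F : Finset ℝ} {a b : ℝ} (ha : a ∈ F) (hb : b ∈ F) (x : ℝ) :
    nf F x ≤ min ((x - a) ^ 2) ((x - b) ^ 2) :=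
  le_min (nf_le ha x) (nf_le hb x)

lemma min_le_nf {F : Finset ℝ} (hF : F.Nonempty) {a b x : ℝ} (hax : a ≤ x) (hxb : x ≤ b)
    (hsep : ∀ s ∈ F, s ≤ a ∨ b ≤ s) : min ((x - a) ^ 2) ((x - b) ^ 2) ≤ nf F x :=
  le_nf hF fun s hs => by
    rcases hsep s hs with h | h
    · exact le_trans (min_le_left _ _) (by nlinarith)
    · exact le_trans (min_le_right _ _) (by nlinarith)

lemma integral_sq (e a b : ℝ) : ∫ x in a..b, (x - e) ^ 2 = ((b - e) ^ 3 - (a - e) ^ 3) / 3 := by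
  have hd : ∀ x : ℝ, HasDerivAt (fun y => (y - e) ^ 3 / 3) ((x - e) ^ 2) x := by
    intro x
    have h1 : HasDerivAt (fun y : ℝ => (y - e) ^ 3) (3 * (x - e) ^ (3 - 1) * 1) x :=
      ((hasDerivAt_id x).sub_const e).pow 3
    have := h1.div_const 3
    rw [show (x - e) ^ 2 = 3 * (x - e) ^ (3 - 1) * 1 / 3 by norm_num]
    exact this
  rw [intervalIntegral.integral_eq_sub_of_hasDerivAt (fun x _ => hd x)
    (Continuous.intervalIntegrable (by fun_prop) _ _)]
  ring

lemma integral_min_sq {a b : ℝ} (hab : a ≤ b) :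
    ∫ x in a..b, min ((x - a) ^ 2) ((x - b) ^ 2) = (b - a) ^ 3 / 12 := by
  set mid := (a + b) / 2 with hmid
  have h1 : a ≤ mid := by rw [hmid]; linarith
  have h2 : mid ≤ b := by rw [hmid]; linarith
  have hInt : ∀ u v : ℝ, IntervalIntegrable (fun x => min ((x - a) ^ 2) ((x - b) ^ 2)) volume u v :=
    fun u v => Continuous.intervalIntegrable (by fun_prop) _ _
  rw [← intervalIntegral.integral_add_adjacent_intervals (b := mid) (hInt a mid) (hInt mid b)]
  have e1 : ∫ x in a..mid, min ((x - a) ^ 2) ((x - b) ^ 2) = ∫ x in a..mid, (x - a) ^ 2 := by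
    apply intervalIntegral.integral_congr
    intro x hx
    rw [Set.uIcc_of_le h1] at hx
    exact min_eq_left (by nlinarith [hx.1, hx.2])
  have e2 : ∫ x in mid..b, min ((x - a) ^ 2) ((x - b) ^ 2) = ∫ x in mid..b, (x - b) ^ 2 := by
    apply intervalIntegral.integral_congr
    intro x hx
    rw [Set.uIcc_of_le h2] at hx
    exact min_eq_right (by nlinarith [hx.1, hx.2])
  rw [e1, e2, integral_sq, integral_sq, hmid]
  ring

lemma gap_le {F : Finset ℝ} {a b : ℝ} (ha : a ∈ F) (hb : b ∈ F) (hab : a ≤ b) :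
    ∫ x in a..b, nf F x ≤ (b - a) ^ 3 / 12 := by
  have hF : F.Nonempty := ⟨a, ha⟩
  calc ∫ x in a..b, nf F x ≤ ∫ x in a..b, min ((x - a) ^ 2) ((x - b) ^ 2) :=
        intervalIntegral.integral_mono_on hab
          ((continuous_nf hF).intervalIntegrable _ _)
          (Continuous.intervalIntegrable (by fun_prop) _ _)
          (fun x _ => nf_le_min ha hb x)
    _ = (b - a) ^ 3 / 12 := integral_min_sq hab

lemma gap_ge {F : Finset ℝ} (hF : F.Nonempty) {a b : ℝ} (hab : a ≤ b)
    (hsep : ∀ s ∈ F, s ≤ a ∨ b ≤ s) :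
    (b - a) ^ 3 / 12 ≤ ∫ x in a..b, nf F x := by
  calc (b - a) ^ 3 / 12 = ∫ x in a..b, min ((x - a) ^ 2) ((x - b) ^ 2) := (integral_min_sq hab).symm
    _ ≤ ∫ x in a..b, nf F x :=
        intervalIntegral.integral_mono_on hab
          (Continuous.intervalIntegrable (by fun_prop) _ _)
          ((continuous_nf hF).intervalIntegrable _ _)
          (fun x hx => min_le_nf hF hx.1 hx.2 hsep)

lemma interval_lower {F : Finset ℝ} {u v : ℝ} (hu : u ∈ F) (hv : v ∈ F) (huv : u < v) :
    (v - u) ^ 3 / (12 * (((F.filter (fun z => z ∈ Set.Icc u v)).card - 1 : ℕ) : ℝ) ^ 2)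
      ≤ ∫ x in u..v, nf F x := by
  classical
  set T := F.filter (fun z => z ∈ Set.Icc u v) with hT
  have huT : u ∈ T := by simp [hT, hu, Set.mem_Icc, le_refl, huv.le]
  have hvT : v ∈ T := by simp [hT, hv, Set.mem_Icc, le_refl, huv.le]
  have hmemT : ∀ z ∈ T, u ≤ z ∧ z ≤ v := by
    intro z hz
    simp only [hT, Finset.mem_filter, Set.mem_Icc] at hz
    exact hz.2
  set k := T.card with hk
  have hk2 : 2 ≤ k := Finset.one_lt_card.mpr ⟨u, huT, v, hvT, ne_of_lt huv⟩
  set l := T.sort (· ≤ ·) with hl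
  have hlen : l.length = k := Finset.length_sort _
  have hsorted : l.Pairwise (· ≤ ·) := Finset.pairwise_sort ..
  have hpair := List.pairwise_iff_getElem.mp hsorted
  set a : ℕ → ℝ := fun i => l.getD i v with ha
  have haget : ∀ i (h : i < k), a i = l[i]'(by omega) := by
    intro i h; simp [ha, List.getD_eq_getElem?_getD, List.getElem?_eq_getElem (by omega : i < l.length)]
  have hamem : ∀ i, i < k → a i ∈ T := by
    intro i h; rw [haget i h]
    have : l[i]'(by omega) ∈ l := List.getElem_mem _
    exact (Finset.mem_sort _).mp this
  have hmono : ∀ i j, i ≤ j → a i ≤ a j := by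
    intro i j hij
    rcases eq_or_lt_of_le hij with rfl | hlt
    · exact le_rfl
    · by_cases hj : j < k
      · rw [haget i (lt_trans hlt hj), haget j hj]
        exact hpair i j (by omega) (by omega) hlt
      · have hjv : a j = v := by
          simp [ha, List.getD_eq_getElem?_getD, List.getElem?_eq_none (show l.length ≤ j by omega)]
        rw [hjv]
        by_cases hi : i < k
        · exact (hmemT _ (hamem i hi)).2
        · simp [ha, List.getD_eq_getElem?_getD, List.getElem?_eq_none (show l.length ≤ i by omega)]
  have hidx : ∀ z ∈ T, ∃ i, i < k ∧ a i = z := by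
    intro z hz
    have : z ∈ l := (Finset.mem_sort _).mpr hz
    obtain ⟨i, hi, hiz⟩ := List.mem_iff_getElem.mp this
    exact ⟨i, by omega, by rw [haget i (by omega)]; exact hiz⟩
  have ha0 : a 0 = u := by
    obtain ⟨i, hi, hiz⟩ := hidx u huT
    have h1 : a 0 ≤ u := hiz ▸ hmono 0 i (Nat.zero_le _)
    exact le_antisymm h1 (hmemT _ (hamem 0 (by omega))).1
  have halast : a (k - 1) = v := by
    obtain ⟨i, hi, hiz⟩ := hidx v hvT
    have h1 : v ≤ a (k - 1) := hiz ▸ hmono i (k - 1) (by omega)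
    exact le_antisymm (hmemT _ (hamem (k - 1) (by omega))).2 h1
  have hFne : F.Nonempty := ⟨u, hu⟩
  have hsep : ∀ i, i < k - 1 → ∀ s ∈ F, s ≤ a i ∨ a (i + 1) ≤ s := by
    intro i hi s hs
    by_cases hsT : s ∈ Set.Icc u v
    · have hsT' : s ∈ T := Finset.mem_filter.mpr ⟨hs, hsT⟩
      obtain ⟨j, hj, hjz⟩ := hidx s hsT'
      by_cases hji : j ≤ i
      · exact Or.inl (hjz ▸ hmono j i hji)
      · exact Or.inr (hjz ▸ hmono (i + 1) j (by omega))
    · rw [Set.mem_Icc] at hsT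
      push_neg at hsT
      by_cases hsu : u ≤ s
      · exact Or.inr (le_trans (hmemT _ (hamem (i + 1) (by omega))).2 (hsT hsu).le)
      · exact Or.inl (le_trans (le_of_not_ge hsu) (hmemT _ (hamem i (by omega))).1)
  have hdecomp : ∑ i ∈ Finset.range (k - 1), ∫ x in a i..a (i + 1), nf F x
      = ∫ x in (a 0)..(a (k - 1)), nf F x :=
    intervalIntegral.sum_integral_adjacent_intervals
      (fun i _ => (continuous_nf hFne).intervalIntegrable _ _)
  have hterm : ∀ i ∈ Finset.range (k - 1),
      (a (i + 1) - a i) ^ 3 / 12 ≤ ∫ x in a i..a (i + 1), nf F x := by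
    intro i hi
    rw [Finset.mem_range] at hi
    exact gap_ge hFne (hmono i (i + 1) (by omega)) (hsep i hi)
  have hsumg : ∑ i ∈ Finset.range (k - 1), (a (i + 1) - a i) = v - u := by
    rw [Finset.sum_range_sub a (k - 1), halast, ha0]
  have hpow := pow_sum_div_card_le_sum_pow (s := Finset.range (k - 1))
    (f := fun i => a (i + 1) - a i) (fun i _ => sub_nonneg.mpr (hmono i (i + 1) (by omega))) 2
  rw [hsumg, Finset.card_range] at hpow
  calc (v - u) ^ 3 / (12 * (((k - 1 : ℕ)) : ℝ) ^ 2)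
      = ((v - u) ^ 3 / ((k - 1 : ℕ) : ℝ) ^ 2) / 12 := by ring
    _ ≤ (∑ i ∈ Finset.range (k - 1), (a (i + 1) - a i) ^ 3) / 12 := by
        apply div_le_div_of_nonneg_right ?_ (by norm_num)
        exact_mod_cast hpow
    _ = ∑ i ∈ Finset.range (k - 1), (a (i + 1) - a i) ^ 3 / 12 := Finset.sum_div _ _ _
    _ ≤ ∑ i ∈ Finset.range (k - 1), ∫ x in a i..a (i + 1), nf F x := Finset.sum_le_sum hterm
    _ = ∫ x in u..v, nf F x := by rw [hdecomp, ha0, halast]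

lemma distortion_nonneg (P : Measure ℝ) (s : Set ℝ) : 0 ≤ distortion P s :=
  integral_nonneg fun x => sInf_img_nonneg s x

lemma distortion_uniformOn {L : ℝ} (hL : 0 < L) (s : Set ℝ) :
    distortion (uniformOn 0 L) s
      = L⁻¹ * ∫ x in Set.Icc 0 L, sInf ((fun a => (x - a) ^ 2) '' s) := by
  rw [distortion, uniformOn, integral_smul_measure, sub_zero, smul_eq_mul,
    ENNReal.toReal_inv, ENNReal.toReal_ofReal hL.le]

lemma sInf_img_inter_Icc {s : Set ℝ} {A B x : ℝ} (hA : A ∈ s) (hB : B ∈ s)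
    (hx : x ∈ Set.Icc A B) :
    sInf ((fun a => (x - a) ^ 2) '' s) = sInf ((fun a => (x - a) ^ 2) '' (s ∩ Set.Icc A B)) := by
  have hAB : A ≤ B := le_trans hx.1 hx.2
  have hAmem : A ∈ s ∩ Set.Icc A B := ⟨hA, le_rfl, hAB⟩
  have hBmem : B ∈ s ∩ Set.Icc A B := ⟨hB, hAB, le_rfl⟩
  apply le_antisymm
  · exact csInf_le_csInf (bddBelow_img _ _) ((Set.nonempty_of_mem hAmem).image _)
      (Set.image_mono Set.inter_subset_left)
  · apply le_csInf ((Set.nonempty_of_mem hA).image _)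
    rintro y ⟨t, ht, rfl⟩
    by_cases htI : t ∈ Set.Icc A B
    · exact csInf_le (bddBelow_img _ _) ⟨t, ⟨ht, htI⟩, rfl⟩
    · rw [Set.mem_Icc] at htI
      push_neg at htI
      by_cases htA : A ≤ t
      · calc sInf _ ≤ (x - B) ^ 2 := sInf_img_le hBmem x
          _ ≤ (x - t) ^ 2 := by nlinarith [hx.2, (htI htA)]
      · calc sInf _ ≤ (x - A) ^ 2 := sInf_img_le hAmem x
          _ ≤ (x - t) ^ 2 := by nlinarith [hx.1, le_of_not_ge htA]

lemma strict_insert {F : Finset ℝ} (hF : F.Nonempty) {L p : ℝ} (hp0 : 0 < p) (hpL : p < L)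
    (hpF : p ∉ F) :
    ∫ x in Set.Icc 0 L, nf (insert p F) x < ∫ x in Set.Icc 0 L, nf F x := by
  classical
  set d := (F.image (fun t => |p - t|)).min' (hF.image _) with hd
  have hd0 : 0 < d := by
    rw [hd, Finset.lt_min'_iff]
    rintro y hy
    obtain ⟨t, ht, rfl⟩ := Finset.mem_image.mp hy
    have : p ≠ t := fun h => hpF (h ▸ ht)
    exact abs_pos.mpr (sub_ne_zero.mpr this)
  have hdle : ∀ t ∈ F, d ≤ |p - t| := fun t ht =>
    Finset.min'_le _ _ (Finset.mem_image_of_mem _ ht)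
  set ε := min (d / 4) (min p (L - p)) with hε
  have hε0 : 0 < ε := by
    rw [hε]; exact lt_min (by linarith) (lt_min hp0 (by linarith))
  have hεd : ε ≤ d / 4 := min_le_left _ _
  have hεp : ε ≤ p := le_trans (min_le_right _ _) (min_le_left _ _)
  have hεL : ε ≤ L - p := le_trans (min_le_right _ _) (min_le_right _ _)
  have hJsub : Set.Icc (p - ε) (p + ε) ⊆ Set.Icc 0 L := by
    intro x hx
    exact ⟨by linarith [hx.1], by linarith [hx.2]⟩
  have hkey : ∀ x ∈ Set.Icc (p - ε) (p + ε), d ^ 2 / 2 ≤ nf F x - nf (insert p F) x := by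
    intro x hx
    have hxp : |x - p| ≤ d / 4 := by
      rw [abs_le]; constructor <;> [linarith [hx.1, hεd]; linarith [hx.2, hεd]]
    have h1 : nf (insert p F) x ≤ d ^ 2 / 16 := by
      calc nf (insert p F) x ≤ (x - p) ^ 2 := nf_le (Finset.mem_insert_self p F) x
        _ ≤ d ^ 2 / 16 := by nlinarith [abs_nonneg (x - p), sq_abs (x - p)]
    have h2 : 9 * d ^ 2 / 16 ≤ nf F x := by
      apply le_nf hF
      intro t ht
      have htr : d ≤ |p - x| + |x - t| := le_trans (hdle t ht) (abs_sub_le p x t)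
      have habs : 3 * d / 4 ≤ |x - t| := by
        have : |p - x| ≤ d / 4 := by rwa [abs_sub_comm]
        linarith
      nlinarith [abs_nonneg (x - t), sq_abs (x - t)]
    linarith
  have hint2 : IntegrableOn (nf (insert p F)) (Set.Icc 0 L) volume :=
    (continuous_nf (Finset.insert_nonempty p F)).integrableOn_Icc
  have hint1 : IntegrableOn (nf F) (Set.Icc 0 L) volume :=
    (continuous_nf hF).integrableOn_Icc
  rw [← sub_pos, ← integral_sub hint1 hint2]
  have hgint : IntegrableOn (fun x => nf F x - nf (insert p F) x) (Set.Icc 0 L) volume :=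
    hint1.sub hint2
  have hgnn : ∀ x, 0 ≤ nf F x - nf (insert p F) x := fun x =>
    sub_nonneg.mpr (nf_anti (Finset.subset_insert p F) hF x)
  calc (0 : ℝ) < (d ^ 2 / 2) * (volume (Set.Icc (p - ε) (p + ε))).toReal := by
        rw [Real.volume_Icc]
        have : p + ε - (p - ε) = 2 * ε := by ring
        rw [this, ENNReal.toReal_ofReal (by linarith)]
        positivity
    _ ≤ ∫ x in Set.Icc (p - ε) (p + ε), (nf F x - nf (insert p F) x) := by
        have := setIntegral_ge_of_const_le measurableSet_Icc
          (by rw [Real.volume_Icc]; exact ENNReal.ofReal_ne_top)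
          hkey (hgint.mono_set hJsub)
        rwa [smul_eq_mul, mul_comm, Measure.real] at this
    _ ≤ ∫ x in Set.Icc 0 L, (nf F x - nf (insert p F) x) :=
        setIntegral_mono_set hgint (Filter.Eventually.of_forall hgnn)
          (Filter.Eventually.of_forall hJsub)

lemma condQuantError_le (P : Measure ℝ) (β : Set ℝ) (n : ℕ) {α : Set ℝ} (hf : α.Finite)
    (hcard : α.ncard ≤ n - β.ncard) : condQuantError P β n ≤ distortion P (α ∪ β) :=
  csInf_le ⟨0, fun _ ⟨α', _, _, hv⟩ => hv ▸ distortion_nonneg P (α' ∪ β)⟩ ⟨α, hf, hcard, rfl⟩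

noncomputable def grid (c : ℕ → ℝ) (d : ℝ) (k : ℕ → ℕ) (m : ℕ) : Finset ℝ :=
  (Finset.Icc 1 m).biUnion fun j =>
    (Finset.range (k j)).image fun t : ℕ => c j + (t : ℝ) * (d / ((k j : ℝ) - 1))

section Grid

variable {c : ℕ → ℝ} {d : ℝ} {k : ℕ → ℕ} {m : ℕ}

lemma blockpt_mem_grid {j t : ℕ} (hj : j ∈ Finset.Icc 1 m) (ht : t < k j) :
    c j + (t : ℝ) * (d / ((k j : ℝ) - 1)) ∈ grid c d k m :=
  Finset.mem_biUnion.mpr ⟨j, hj, Finset.mem_image.mpr ⟨t, Finset.mem_range.mpr ht, rfl⟩⟩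

lemma c_mem_grid {j : ℕ} (hj : j ∈ Finset.Icc 1 m) (hkj : 2 ≤ k j) : c j ∈ grid c d k m := by
  have := blockpt_mem_grid (c := c) (d := d) hj (show 0 < k j by omega)
  simpa using this

lemma cast_gap (K : ℕ) (hK : 2 ≤ K) : ((K - 1 : ℕ) : ℝ) * (d / ((K : ℝ) - 1)) = d := by
  have h1 : ((K - 1 : ℕ) : ℝ) = (K : ℝ) - 1 := by
    rw [Nat.cast_sub (by omega)]; norm_num
  have h2 : (K : ℝ) - 1 ≠ 0 := by
    have : (2 : ℝ) ≤ (K : ℝ) := by exact_mod_cast hK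
    linarith
  rw [h1]; field_simp

lemma c_succ_mem_grid (hc : ∀ j, c (j + 1) = c j + d) {j : ℕ} (hj : j ∈ Finset.Icc 1 m)
    (hkj : 2 ≤ k j) : c (j + 1) ∈ grid c d k m := by
  have := blockpt_mem_grid (c := c) (d := d) hj (show k j - 1 < k j by omega)
  rwa [cast_gap (k j) hkj, ← hc j] at this

lemma grid_interval_bound (hd : 0 < d) (hc : ∀ j, c (j + 1) = c j + d)
    {j : ℕ} (hj : j ∈ Finset.Icc 1 m) (hkj : 2 ≤ k j) :
    ∫ x in (c j)..(c (j + 1)), nf (grid c d k m) x ≤ d ^ 3 / (12 * ((k j : ℝ) - 1) ^ 2) := by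
  set K := k j with hK
  set h := d / ((K : ℝ) - 1) with hh
  have hK1 : (1 : ℝ) ≤ (K : ℝ) - 1 := by
    have : (2 : ℝ) ≤ (K : ℝ) := by exact_mod_cast hkj
    linarith
  have hh0 : 0 < h := div_pos hd (by linarith)
  set b : ℕ → ℝ := fun t => c j + (t : ℝ) * h with hb
  have hbmem : ∀ t, t < K → b t ∈ grid c d k m := fun t ht => blockpt_mem_grid hj ht
  have hbmono : ∀ t, b t ≤ b (t + 1) := by
    intro t; simp only [hb]; push_cast; nlinarith
  have hgrne : (grid c d k m).Nonempty := ⟨_, hbmem 0 (by omega)⟩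
  have hdecomp : ∑ t ∈ Finset.range (K - 1), ∫ x in (b t)..(b (t + 1)), nf (grid c d k m) x
      = ∫ x in (b 0)..(b (K - 1)), nf (grid c d k m) x :=
    intervalIntegral.sum_integral_adjacent_intervals
      (fun i _ => (continuous_nf hgrne).intervalIntegrable _ _)
  have hb0 : b 0 = c j := by simp [hb]
  have hblast : b (K - 1) = c (j + 1) := by
    simp only [hb]
    rw [cast_gap K hkj, ← hc j]
  have hterm : ∀ t ∈ Finset.range (K - 1),
      ∫ x in (b t)..(b (t + 1)), nf (grid c d k m) x ≤ h ^ 3 / 12 := by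
    intro t ht
    rw [Finset.mem_range] at ht
    have h1 := gap_le (hbmem t (by omega)) (hbmem (t + 1) (by omega)) (hbmono t)
    have h2 : b (t + 1) - b t = h := by simp only [hb]; push_cast; ring
    rwa [h2] at h1
  calc ∫ x in (c j)..(c (j + 1)), nf (grid c d k m) x
      = ∑ t ∈ Finset.range (K - 1), ∫ x in (b t)..(b (t + 1)), nf (grid c d k m) x := by
        rw [hdecomp, hb0, hblast]
    _ ≤ ∑ t ∈ Finset.range (K - 1), h ^ 3 / 12 := Finset.sum_le_sum hterm
    _ = ((K - 1 : ℕ) : ℝ) * (h ^ 3 / 12) := by rw [Finset.sum_const, Finset.card_range]; ring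
    _ = d ^ 3 / (12 * ((K : ℝ) - 1) ^ 2) := by
        have h1 : ((K - 1 : ℕ) : ℝ) = (K : ℝ) - 1 := by rw [Nat.cast_sub (by omega)]; norm_num
        rw [h1, hh]
        field_simp

lemma grid_card_bound (hd : 0 < d) (hc : ∀ j, c (j + 1) = c j + d) {β : Set ℝ}
    (hk2 : ∀ j ∈ Finset.Icc 1 m, 2 ≤ k j)
    (hβ : ∀ j ∈ Finset.Icc 1 m, c j ∈ β ∧ c (j + 1) ∈ β) :
    ((grid c d k m : Set ℝ) \ β).ncard ≤ ∑ j ∈ Finset.Icc 1 m, (k j - 2) := by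
  classical
  set G' : Finset ℝ := (Finset.Icc 1 m).biUnion (fun j =>
    (((Finset.range (k j)).image fun t : ℕ => c j + (t : ℝ) * (d / ((k j : ℝ) - 1))).erase
      (c j)).erase (c (j + 1))) with hG'
  have hsub : (grid c d k m : Set ℝ) \ β ⊆ ↑G' := by
    rintro x ⟨hxg, hxβ⟩
    obtain ⟨j, hj, hxj⟩ := Finset.mem_biUnion.mp hxg
    have hx1 : x ≠ c j := fun h => hxβ (h ▸ (hβ j hj).1)
    have hx2 : x ≠ c (j + 1) := fun h => hxβ (h ▸ (hβ j hj).2)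
    exact Finset.mem_coe.mpr (Finset.mem_biUnion.mpr
      ⟨j, hj, Finset.mem_erase.mpr ⟨hx2, Finset.mem_erase.mpr ⟨hx1, hxj⟩⟩⟩)
  calc ((grid c d k m : Set ℝ) \ β).ncard ≤ G'.card := by
        have := Set.ncard_le_ncard hsub (Finset.finite_toSet G')
        simpa using this
    _ ≤ ∑ j ∈ Finset.Icc 1 m, (k j - 2) := by
        apply le_trans (Finset.card_biUnion_le)
        apply Finset.sum_le_sum
        intro j hj
        have hkj := hk2 j hj
        set B := (Finset.range (k j)).image fun t : ℕ => c j + (t : ℝ) * (d / ((k j : ℝ) - 1)) with hB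
        have hcjB : c j ∈ B := by
          refine Finset.mem_image.mpr ⟨0, Finset.mem_range.mpr (show 0 < k j by omega), by simp⟩
        have hcj1B : c (j + 1) ∈ B.erase (c j) := by
          apply Finset.mem_erase.mpr
          constructor
          · rw [hc j]; intro h; nlinarith [hd]
          · have h3 : c j + ((k j - 1 : ℕ) : ℝ) * (d / ((k j : ℝ) - 1)) ∈ B :=
              Finset.mem_image.mpr ⟨k j - 1,
                Finset.mem_range.mpr (show k j - 1 < k j by omega), rfl⟩
            rw [cast_gap (k j) hkj, ← hc j] at h3
            exact h3
        calc ((B.erase (c j)).erase (c (j + 1))).card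
            = (B.erase (c j)).card - 1 := Finset.card_erase_of_mem hcj1B
          _ = B.card - 1 - 1 := by rw [Finset.card_erase_of_mem hcjB]
          _ ≤ k j - 2 := by
              have : B.card ≤ k j := le_trans Finset.card_image_le (by simp)
              omega

end Grid

lemma aux_dec {a b : ℝ} (ha : 1 ≤ a) (hab : a + 1 ≤ b) :
    1 / b ^ 2 - 1 / (b + 1) ^ 2 < 1 / a ^ 2 - 1 / (a + 1) ^ 2 := by
  have ha0 : 0 < a := by linarith
  have hb0 : 0 < b := by linarith
  have h1 : 1 / b ^ 2 - 1 / (b + 1) ^ 2 = (2 * b + 1) / (b ^ 2 * (b + 1) ^ 2) := by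
    field_simp; ring
  have h2 : 1 / a ^ 2 - 1 / (a + 1) ^ 2 = (2 * a + 1) / (a ^ 2 * (a + 1) ^ 2) := by
    field_simp; ring
  rw [h1, h2, div_lt_div_iff₀ (by positivity) (by positivity)]
  have hin : 0 < (a + b) * (a + 1) ^ 2 * (b + 1) ^ 2 - (a + b + 2) * a ^ 2 * b ^ 2 := by
    have hid : (a + 1) ^ 2 * (b + 1) ^ 2 = (a * b + a + b + 1) ^ 2 := by ring
    nlinarith [mul_pos ha0 hb0, sq_nonneg (a + b + 1), mul_pos (mul_pos ha0 hb0) (mul_pos ha0 hb0),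
      mul_pos (mul_pos ha0 hb0) (add_pos ha0 hb0)]
  have hfac : (2 * a + 1) * (b ^ 2 * (b + 1) ^ 2) - (2 * b + 1) * (a ^ 2 * (a + 1) ^ 2)
      = (b - a) * ((a + b) * (a + 1) ^ 2 * (b + 1) ^ 2 - (a + b + 2) * a ^ 2 * b ^ 2) := by ring
  nlinarith [mul_pos (show (0:ℝ) < b - a by linarith) hin]

lemma convex_step {p q : ℝ} (hq : 1 ≤ q) (hpq : q + 2 ≤ p) :
    1 / (p - 1) ^ 2 + 1 / (q + 1) ^ 2 < 1 / p ^ 2 + 1 / q ^ 2 := by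
  have h := aux_dec hq (show q + 1 ≤ p - 1 by linarith)
  have hp : p - 1 + 1 = p := by ring
  rw [hp] at h
  linarith


/-- Lemma 4.3: if `γ_n = α ∪ β` is a conditional optimal set of `n`-points for the uniform
distribution `Q` on `[0, 2mr sin(π/m)]` with respect to the conditional set
`β = {c_j : 1 ≤ j ≤ m+1}`, `c_j = 2(j-1)r sin(π/m)`, and `n_j = card(γ_n ∩ [c_j, c_{j+1}])`,
then `n_j ≥ 2`, `Σ n_j = n + m - 1`, and `|n_i - n_j| ∈ {0, 1}`. -/
theorem stmt12 (m : ℕ) (hm : 3 ≤ m) (r : ℝ) (hr : 0 < r) (n : ℕ) (hn : m + 1 ≤ n)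
    (c : ℕ → ℝ) (hc : ∀ j : ℕ, c j = 2 * ((j : ℝ) - 1) * r * Real.sin (Real.pi / m))
    (Q : Measure ℝ) (hQ : Q = uniformOn 0 (2 * m * r * Real.sin (Real.pi / m)))
    (β : Set ℝ) (hβ : β = c '' Set.Icc 1 (m + 1))
    (α : Set ℝ) (hαf : α.Finite) (hαcard : α.ncard ≤ n - β.ncard)
    (hopt : distortion Q (α ∪ β) = condQuantError Q β n)
    (nn : ℕ → ℕ) (hnn : ∀ j : ℕ, nn j = ((α ∪ β) ∩ Set.Icc (c j) (c (j + 1))).ncard) :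
    (∀ j ∈ Set.Icc 1 m, 2 ≤ nn j)
    ∧ (∑ j ∈ Finset.Icc 1 m, nn j) = n + m - 1
    ∧ (∀ i ∈ Set.Icc 1 m, ∀ j ∈ Set.Icc 1 m, i ≠ j →
        nn i = nn j ∨ nn i = nn j + 1 ∨ nn j = nn i + 1) := by
  classical
  -- basic setup
  set s0 := Real.sin (Real.pi / m) with hs0def
  have hm1 : (1 : ℝ) < (m : ℝ) := by exact_mod_cast (by omega : 1 < m)
  have hs0 : 0 < s0 := Real.sin_pos_of_pos_of_lt_pi
    (div_pos Real.pi_pos (by linarith)) ((div_lt_self Real.pi_pos hm1))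
  set d := 2 * r * s0 with hddef
  have hd : 0 < d := by positivity
  have hcd : ∀ j : ℕ, c j = ((j : ℝ) - 1) * d := fun j => by rw [hc]; ring
  have hcsucc : ∀ j, c (j + 1) = c j + d := fun j => by rw [hcd, hcd]; push_cast; ring
  have hcmono : Monotone c := monotone_nat_of_le_succ fun j => by rw [hcsucc]; linarith
  have hcstrict : ∀ i j : ℕ, i < j → c i < c j := by
    intro i j hij
    rw [hcd, hcd]
    have : (i : ℝ) < (j : ℝ) := by exact_mod_cast hij
    nlinarith
  have hcinj : Function.Injective c := fun i j hij => by
    rcases lt_trichotomy i j with h | h | h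
    · exact absurd hij (ne_of_lt (hcstrict i j h))
    · exact h
    · exact absurd hij.symm (ne_of_lt (hcstrict j i h))
  set L := (m : ℝ) * d with hLdef
  have hL : 0 < L := by positivity
  have hQL : Q = uniformOn 0 L := by
    rw [hQ]; congr 1; rw [hLdef, hddef]; ring
  have hc1 : c 1 = 0 := by rw [hcd]; norm_num
  have hcm1 : c (m + 1) = L := by rw [hcd]; push_cast; rw [hLdef]; ring
  -- β facts
  have hβfin : β.Finite := hβ ▸ (Set.finite_Icc 1 (m + 1)).image c
  have hβmem : ∀ j : ℕ, 1 ≤ j → j ≤ m + 1 → c j ∈ β := fun j h1 h2 =>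
    hβ ▸ ⟨j, ⟨h1, h2⟩, rfl⟩
  have hβcard : β.ncard = m + 1 := by
    rw [hβ, Set.ncard_image_of_injective _ hcinj, ← Finset.coe_Icc, Set.ncard_coe_finset,
      Nat.card_Icc]
    omega
  have hβsubIcc : β ⊆ Set.Icc 0 L := by
    rw [hβ]
    rintro x ⟨j, ⟨hj1, hj2⟩, rfl⟩
    exact ⟨hc1 ▸ hcmono hj1, hcm1 ▸ hcmono hj2⟩
  -- the finsets
  have hγfin : (α ∪ β).Finite := hαf.union hβfin
  set G := hγfin.toFinset with hGdef
  have hG : ↑G = α ∪ β := hγfin.coe_toFinset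
  set Gc := G.filter (fun z => z ∈ Set.Icc 0 L) with hGcdef
  have hGc : ↑Gc = (α ∪ β) ∩ Set.Icc 0 L := by
    rw [hGcdef, Finset.coe_filter]
    rw [← hG]; ext x
    simp only [Set.mem_setOf_eq, Set.mem_inter_iff, Finset.mem_coe, Set.mem_Icc]
  have hmemGc : ∀ j : ℕ, 1 ≤ j → j ≤ m + 1 → c j ∈ Gc := by
    intro j h1 h2
    have : c j ∈ (α ∪ β) ∩ Set.Icc 0 L :=
      ⟨Or.inr (hβmem j h1 h2), hβsubIcc (hβmem j h1 h2)⟩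
    rw [← hGc] at this
    exact_mod_cast this
  have hGcne : Gc.Nonempty := ⟨c 1, hmemGc 1 le_rfl (by omega)⟩
  -- distortion formula for the optimal set
  have key1 : distortion Q (α ∪ β) = L⁻¹ * ∫ x in Set.Icc 0 L, nf Gc x := by
    rw [hQL, distortion_uniformOn hL]
    congr 1
    apply setIntegral_congr_fun measurableSet_Icc
    intro x hx
    have h0 : (0 : ℝ) ∈ α ∪ β := Or.inr (hc1 ▸ hβmem 1 le_rfl (by omega))
    have hLm : L ∈ α ∪ β := Or.inr (hcm1 ▸ hβmem (m + 1) (by omega) le_rfl)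
    rw [show nf Gc x = sInf ((fun a => (x - a) ^ 2) '' ((α ∪ β) ∩ Set.Icc 0 L)) from
      by rw [nf, hGc]]
    exact sInf_img_inter_Icc h0 hLm hx
  -- integral decomposition over intervals
  have hintdec : ∀ (F : Finset ℝ), F.Nonempty →
      ∫ x in Set.Icc 0 L, nf F x = ∑ j ∈ Finset.Icc 1 m, ∫ x in (c j)..(c (j + 1)), nf F x := by
    intro F hF
    have h2 := intervalIntegral.sum_integral_adjacent_intervals (μ := volume)
      (a := fun i => c (i + 1)) (n := m) (f := nf F)
      (fun i _ => (continuous_nf hF).intervalIntegrable _ _)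
    have h1 : ∫ x in Set.Icc 0 L, nf F x = ∫ x in (0 : ℝ)..L, nf F x := by
      rw [intervalIntegral.integral_of_le hL.le, integral_Icc_eq_integral_Ioc]
    rw [h1, ← hc1, ← hcm1, ← h2]
    have h3 : Finset.Icc 1 m = Finset.Ico 1 (m + 1) := by
      rw [Finset.Ico_add_one_right_eq_Icc]
    rw [h3, Finset.sum_Ico_eq_sum_range]
    simp only [Nat.add_sub_cancel]
    apply Finset.sum_congr rfl
    intro i _
    rw [Nat.add_comm 1 i]
  -- counting: nn j as card of a finset filter
  have hnncard : ∀ j ∈ Finset.Icc 1 m,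
      (Gc.filter (fun z => z ∈ Set.Icc (c j) (c (j + 1)))).card = nn j := by
    intro j hj
    rw [Finset.mem_Icc] at hj
    have hsub : Set.Icc (c j) (c (j + 1)) ⊆ Set.Icc 0 L := fun x hx =>
      ⟨le_trans (hc1 ▸ hcmono hj.1) hx.1,
       le_trans hx.2 (hcm1 ▸ hcmono (by omega : j + 1 ≤ m + 1))⟩
    have hxGc : ∀ x, x ∈ Gc ↔ x ∈ (α ∪ β) ∩ Set.Icc 0 L := fun x => by
      rw [← Finset.mem_coe, hGc]
    have hcoe : ↑(Gc.filter (fun z => z ∈ Set.Icc (c j) (c (j + 1))))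
        = (α ∪ β) ∩ Set.Icc (c j) (c (j + 1)) := by
      ext x
      simp only [Finset.coe_filter, Set.mem_setOf_eq, Finset.mem_coe, hxGc,
        Set.mem_inter_iff]
      constructor
      · rintro ⟨⟨h1, _⟩, h3⟩; exact ⟨h1, h3⟩
      · rintro ⟨h1, h3⟩; exact ⟨⟨h1, hsub h3⟩, h3⟩
    rw [hnn, ← hcoe, Set.ncard_coe_finset]
  -- part 1
  have part1 : ∀ j ∈ Finset.Icc 1 m, 2 ≤ nn j := by
    intro j hj
    rw [Finset.mem_Icc] at hj
    rw [hnn]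
    have hfin : ((α ∪ β) ∩ Set.Icc (c j) (c (j + 1))).Finite := hγfin.inter_of_left _
    have hlt : c j < c (j + 1) := hcstrict j (j + 1) (by omega)
    have h1 : c j ∈ (α ∪ β) ∩ Set.Icc (c j) (c (j + 1)) :=
      ⟨Or.inr (hβmem j hj.1 (by omega)), Set.left_mem_Icc.mpr hlt.le⟩
    have h2 : c (j + 1) ∈ (α ∪ β) ∩ Set.Icc (c j) (c (j + 1)) :=
      ⟨Or.inr (hβmem (j + 1) (by omega) (by omega)), Set.right_mem_Icc.mpr hlt.le⟩
    exact (Set.one_lt_ncard hfin).mpr ⟨c j, h1, c (j + 1), h2, ne_of_lt hlt⟩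
  -- lower bound
  have hlow : distortion Q (α ∪ β)
      ≥ L⁻¹ * ∑ j ∈ Finset.Icc 1 m, d ^ 3 / (12 * ((nn j : ℝ) - 1) ^ 2) := by
    rw [key1, hintdec Gc hGcne]
    apply mul_le_mul_of_nonneg_left ?_ (inv_nonneg.mpr hL.le)
    apply Finset.sum_le_sum
    intro j hjF
    have hj := Finset.mem_Icc.mp hjF
    have hcj : c j ∈ Gc := hmemGc j hj.1 (by omega)
    have hcj1 : c (j + 1) ∈ Gc := hmemGc (j + 1) (by omega) (by omega)
    have hlt : c j < c (j + 1) := hcstrict j (j + 1) (by omega)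
    have h := interval_lower hcj hcj1 hlt
    rw [hnncard j hjF] at h
    have hnn2 := part1 j hjF
    have hcast : ((nn j - 1 : ℕ) : ℝ) = (nn j : ℝ) - 1 := by
      rw [Nat.cast_sub (by omega)]; norm_num
    rw [hcast] at h
    have hgap : c (j + 1) - c j = d := by rw [hcsucc j]; ring
    rwa [hgap] at h
  -- upper bound via grids
  have hupper : ∀ k : ℕ → ℕ, (∀ j ∈ Finset.Icc 1 m, 2 ≤ k j) →
      (∑ j ∈ Finset.Icc 1 m, (k j - 2)) ≤ n - (m + 1) →
      condQuantError Q β n ≤ L⁻¹ * ∑ j ∈ Finset.Icc 1 m, d ^ 3 / (12 * ((k j : ℝ) - 1) ^ 2) := by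
    intro k hk2 hkcard
    have hm1' : 1 ≤ m := by omega
    set Gk := grid c d k m with hGk
    have h1mem : (1 : ℕ) ∈ Finset.Icc 1 m := Finset.mem_Icc.mpr ⟨le_rfl, hm1'⟩
    have hGkne : Gk.Nonempty := ⟨c 1, c_mem_grid h1mem (hk2 1 h1mem)⟩
    have hβGk : β ⊆ ↑Gk := by
      rw [hβ]
      rintro x ⟨j, ⟨hj1, hj2⟩, rfl⟩
      by_cases hjm : j ≤ m
      · exact Finset.mem_coe.mpr (c_mem_grid (Finset.mem_Icc.mpr ⟨hj1, hjm⟩)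
          (hk2 j (Finset.mem_Icc.mpr ⟨hj1, hjm⟩)))
      · have hjeq : j = m + 1 := by omega
        subst hjeq
        have hmmem : m ∈ Finset.Icc 1 m := Finset.mem_Icc.mpr ⟨hm1', le_rfl⟩
        exact Finset.mem_coe.mpr (c_succ_mem_grid hcsucc hmmem (hk2 m hmmem))
    have hαf' : ((↑Gk : Set ℝ) \ β).Finite := Gk.finite_toSet.diff
    have hαcard' : ((↑Gk : Set ℝ) \ β).ncard ≤ n - β.ncard := by
      rw [hβcard]
      refine le_trans (grid_card_bound hd hcsucc hk2 ?_) hkcard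
      intro j hj
      rw [Finset.mem_Icc] at hj
      exact ⟨hβmem j hj.1 (by omega), hβmem (j + 1) (by omega) (by omega)⟩
    have hunion : ((↑Gk : Set ℝ) \ β) ∪ β = ↑Gk := Set.diff_union_of_subset hβGk
    calc condQuantError Q β n ≤ distortion Q (((↑Gk : Set ℝ) \ β) ∪ β) :=
          condQuantError_le Q β n hαf' hαcard'
      _ = L⁻¹ * ∫ x in Set.Icc 0 L, nf Gk x := by
          rw [hunion, hQL, distortion_uniformOn hL]; rfl
      _ ≤ L⁻¹ * ∑ j ∈ Finset.Icc 1 m, d ^ 3 / (12 * ((k j : ℝ) - 1) ^ 2) := by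
          rw [hintdec Gk hGkne]
          exact mul_le_mul_of_nonneg_left
            (Finset.sum_le_sum fun j hj => grid_interval_bound hd hcsucc hj (hk2 j hj))
            (inv_nonneg.mpr hL.le)
  -- counting
  have hcount : ∑ j ∈ Finset.Icc 1 m, nn j = Gc.card + (m - 1) := by
    have hstep : ∀ t, 1 ≤ t → t ≤ m →
        (∑ j ∈ Finset.Icc 1 t, nn j)
          = ((α ∪ β) ∩ Set.Icc (c 1) (c (t + 1))).ncard + (t - 1) := by
      intro t ht1 htm
      induction t, ht1 using Nat.le_induction with
      | base => simp [Finset.Icc_self, hnn 1]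
      | succ t ht ih =>
        have ihv := ih (by omega)
        have hins : Finset.Icc 1 (t + 1) = insert (t + 1) (Finset.Icc 1 t) := by
          ext x; simp only [Finset.mem_Icc, Finset.mem_insert]; omega
        rw [hins, Finset.sum_insert (by simp [Finset.mem_Icc]), ihv, hnn (t + 1),
          show t + 1 + 1 = t + 2 by omega]
        set A := (α ∪ β) ∩ Set.Icc (c 1) (c (t + 1)) with hA
        set B := (α ∪ β) ∩ Set.Icc (c (t + 1)) (c (t + 2)) with hB
        have hU : A ∪ B = (α ∪ β) ∩ Set.Icc (c 1) (c (t + 2)) := by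
          rw [hA, hB, ← Set.inter_union_distrib_left,
            Set.Icc_union_Icc_eq_Icc (hcmono (by omega : 1 ≤ t + 1))
              (hcmono (by omega : t + 1 ≤ t + 2))]
        have hI : A ∩ B = {c (t + 1)} := by
          rw [hA, hB, Set.inter_inter_inter_comm, Set.inter_self, Set.Icc_inter_Icc,
            max_eq_right (hcmono (by omega : 1 ≤ t + 1)),
            min_eq_left (hcmono (by omega : t + 1 ≤ t + 2)), Set.Icc_self]
          exact Set.inter_eq_right.mpr
            (Set.singleton_subset_iff.mpr (Or.inr (hβmem (t + 1) (by omega) (by omega))))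
        have hcards := Set.ncard_union_add_ncard_inter A B (hγfin.inter_of_left _)
          (hγfin.inter_of_left _)
        rw [hU, hI, Set.ncard_singleton] at hcards
        omega
    have hfinal := hstep m (by omega) le_rfl
    rw [hc1, hcm1, ← hGc, Set.ncard_coe_finset] at hfinal
    exact hfinal
  -- cardinality is exactly n
  have hβGc : β ⊆ ↑Gc := by
    intro x hx
    rw [hGc]
    exact ⟨Or.inr hx, hβsubIcc hx⟩
  have hNn : Gc.card = n := by
    have hle : Gc.card ≤ n := by
      have h1 : Gc.card ≤ G.card := Finset.card_filter_le _ _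
      have h2 : G.card = (α ∪ β).ncard := by rw [← hG, Set.ncard_coe_finset]
      have h3 : (α ∪ β).ncard ≤ α.ncard + β.ncard := Set.ncard_union_le α β
      have h4 : α.ncard + β.ncard ≤ n := by
        have := hαcard
        omega
      omega
    rcases eq_or_lt_of_le hle with h | hlt
    · exact h
    · exfalso
      obtain ⟨p, hpI, hpGc⟩ := ((Set.Ioo_infinite hL).diff Gc.finite_toSet).nonempty
      have hpGc' : p ∉ Gc := fun h => hpGc (Finset.mem_coe.mpr h)
      set Gp := insert p Gc with hGp
      have hβGp : β ⊆ ↑Gp := subset_trans hβGc (by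
        rw [hGp, Finset.coe_insert]; exact Set.subset_insert p ↑Gc)
      have hcard' : ((↑Gp : Set ℝ) \ β).ncard ≤ n - β.ncard := by
        rw [Set.ncard_diff hβGp hβfin, Set.ncard_coe_finset, hGp,
          Finset.card_insert_of_notMem hpGc', hβcard]
        omega
      have hcqe := condQuantError_le Q β n ((Gp.finite_toSet).diff) hcard'
      rw [Set.diff_union_of_subset hβGp] at hcqe
      have hdist' : distortion Q (↑Gp : Set ℝ) = L⁻¹ * ∫ x in Set.Icc 0 L, nf Gp x := by
        rw [hQL, distortion_uniformOn hL]; rfl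
      have hstrict := strict_insert hGcne hpI.1 hpI.2 hpGc'
      have : distortion Q (↑Gp : Set ℝ) < distortion Q (α ∪ β) := by
        rw [hdist', key1]
        exact mul_lt_mul_of_pos_left hstrict (inv_pos.mpr hL)
      rw [hopt] at this
      exact absurd (lt_of_le_of_lt hcqe this) (lt_irrefl _)
  have part2 : ∑ j ∈ Finset.Icc 1 m, nn j = n + m - 1 := by
    rw [hcount, hNn]; omega
  -- part 3
  have part3core : ∀ i ∈ Finset.Icc 1 m, ∀ j ∈ Finset.Icc 1 m, i ≠ j →
      nn j + 2 ≤ nn i → False := by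
    intro i hi j hj hij hge
    have h2i := part1 i hi
    have h2j := part1 j hj
    set k := Function.update (Function.update nn i (nn i - 1)) j (nn j + 1) with hkdef
    have hki : k i = nn i - 1 := by
      rw [hkdef, Function.update_of_ne hij, Function.update_self]
    have hkj : k j = nn j + 1 := by rw [hkdef, Function.update_self]
    have hkt : ∀ t, t ≠ i → t ≠ j → k t = nn t := fun t h1 h2 => by
      rw [hkdef, Function.update_of_ne h2, Function.update_of_ne h1]
    have hk2 : ∀ t ∈ Finset.Icc 1 m, 2 ≤ k t := by
      intro t ht
      by_cases h1 : t = i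
      · subst h1; rw [hki]; omega
      · by_cases h2 : t = j
        · subst h2; rw [hkj]; omega
        · rw [hkt t h1 h2]; exact part1 t ht
    have hjei : j ∈ (Finset.Icc 1 m).erase i := Finset.mem_erase.mpr ⟨Ne.symm hij, hj⟩
    have hde1 : ∀ F : ℕ → ℕ, ∑ t ∈ Finset.Icc 1 m, F t
        = F i + (F j + ∑ t ∈ ((Finset.Icc 1 m).erase i).erase j, F t) := fun F => by
      rw [Finset.add_sum_erase _ F hjei, Finset.add_sum_erase _ F hi]
    have hde2 : ∀ F : ℕ → ℝ, ∑ t ∈ Finset.Icc 1 m, F t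
        = F i + (F j + ∑ t ∈ ((Finset.Icc 1 m).erase i).erase j, F t) := fun F => by
      rw [Finset.add_sum_erase _ F hjei, Finset.add_sum_erase _ F hi]
    have htail1 : ∑ t ∈ ((Finset.Icc 1 m).erase i).erase j, k t
        = ∑ t ∈ ((Finset.Icc 1 m).erase i).erase j, nn t := by
      apply Finset.sum_congr rfl
      intro t ht
      have h2 := (Finset.mem_erase.mp ht).1
      have h1 := (Finset.mem_erase.mp (Finset.mem_erase.mp ht).2).1
      exact hkt t h1 h2
    have hsumk : ∑ t ∈ Finset.Icc 1 m, k t = ∑ t ∈ Finset.Icc 1 m, nn t := by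
      rw [hde1 k, hde1 nn, htail1, hki, hkj]
      omega
    have hkcard : (∑ t ∈ Finset.Icc 1 m, (k t - 2)) ≤ n - (m + 1) := by
      have hs2 : ∑ t ∈ Finset.Icc 1 m, (k t - 2) + 2 * m = ∑ t ∈ Finset.Icc 1 m, k t := by
        have : ∑ t ∈ Finset.Icc 1 m, k t = ∑ t ∈ Finset.Icc 1 m, (k t - 2 + 2) :=
          Finset.sum_congr rfl fun t ht => by have := hk2 t ht; omega
        rw [this, Finset.sum_add_distrib, Finset.sum_const, Nat.card_Icc]
        simp [Nat.smul_one_eq_cast]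
        omega
      have hsnn : ∑ t ∈ Finset.Icc 1 m, nn t = n + m - 1 := part2
      omega
    have hu := hupper k hk2 hkcard
    -- strict comparison of the two sums
    set f : ℕ → ℝ := fun K => d ^ 3 / (12 * ((K : ℝ) - 1) ^ 2) with hfdef
    have htail2 : ∑ t ∈ ((Finset.Icc 1 m).erase i).erase j, f (k t)
        = ∑ t ∈ ((Finset.Icc 1 m).erase i).erase j, f (nn t) := by
      apply Finset.sum_congr rfl
      intro t ht
      have h2 := (Finset.mem_erase.mp ht).1
      have h1 := (Finset.mem_erase.mp (Finset.mem_erase.mp ht).2).1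
      rw [hkt t h1 h2]
    have hstrictsum : ∑ t ∈ Finset.Icc 1 m, f (k t) < ∑ t ∈ Finset.Icc 1 m, f (nn t) := by
      rw [hde2 (fun t => f (k t)), hde2 (fun t => f (nn t)), htail2]
      have hmain : f (k i) + f (k j) < f (nn i) + f (nn j) := by
        rw [hki, hkj, hfdef]
        beta_reduce
        set p : ℝ := (nn i : ℝ) with hp
        set q : ℝ := (nn j : ℝ) with hq
        have hp2 : (2 : ℝ) ≤ p := by rw [hp]; exact_mod_cast h2i
        have hq2 : (2 : ℝ) ≤ q := by rw [hq]; exact_mod_cast h2j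
        have hpq : q + 2 ≤ p := by
          rw [hp, hq]; exact_mod_cast hge
        have hcast1 : ((nn i - 1 : ℕ) : ℝ) = p - 1 := by
          rw [Nat.cast_sub (by omega), hp]; norm_num
        have hcast2 : ((nn j + 1 : ℕ) : ℝ) = q + 1 := by push_cast [hq]; ring
        rw [hcast1, hcast2]
        have hP : (1 : ℝ) ≤ q - 1 + 1 := by linarith
        have hstep := convex_step (p := p - 1) (q := q - 1) (by linarith) (by linarith)
        have hd312 : (0 : ℝ) < d ^ 3 / 12 := by positivity
        have hmul := mul_lt_mul_of_pos_left hstep hd312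
        have hx1 : (p - 1 - 1) ≠ 0 := ne_of_gt (by linarith)
        have hx2 : (q + 1 - 1) ≠ 0 := ne_of_gt (by linarith)
        have hx3 : (p - 1) ≠ 0 := ne_of_gt (by linarith)
        have hx4 : (q - 1) ≠ 0 := ne_of_gt (by linarith)
        have e : ∀ X : ℝ, X ≠ 0 → d ^ 3 / (12 * X ^ 2) = d ^ 3 / 12 * (1 / X ^ 2) := by
          intro X hX; field_simp
        rw [e _ hx1, e _ hx2, e _ hx3, e _ hx4, show q + 1 - 1 = q - 1 + 1 by ring]
        rw [mul_add, mul_add] at hmul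
        exact hmul
      linarith
    have hlt2 : L⁻¹ * ∑ t ∈ Finset.Icc 1 m, f (k t)
        < L⁻¹ * ∑ t ∈ Finset.Icc 1 m, f (nn t) :=
      mul_lt_mul_of_pos_left hstrictsum (inv_pos.mpr hL)
    rw [hopt] at hlow
    have : condQuantError Q β n < condQuantError Q β n :=
      lt_of_le_of_lt hu (lt_of_lt_of_le hlt2 hlow)
    exact absurd this (lt_irrefl _)
  refine ⟨fun j hj => part1 j (by simpa [Finset.mem_Icc] using hj), part2, ?_⟩
  intro i hi j hj hij
  by_contra hcon
  push_neg at hcon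
  obtain ⟨h1, h2, h3⟩ := hcon
  have hi' : i ∈ Finset.Icc 1 m := by simpa [Finset.mem_Icc] using hi
  have hj' : j ∈ Finset.Icc 1 m := by simpa [Finset.mem_Icc] using hj
  rcases (by omega : nn j + 2 ≤ nn i ∨ nn i + 2 ≤ nn j) with h | h
  · exact part3core i hi' j hj' hij h
  · exact part3core j hj' i hi' (Ne.symm hij) h
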